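/- Let p, q, r, u, v be positive integers and let s be a complex number with Re s > 1. Then the lattice sum ∑ 1/(m^p · n^s · (m+n)^q · (m+2n)^r · (m+3n)^u · (2m+3n)^v), taken over all pairs (m, n) with n ≥ 1 an integer and m a nonzero integer such that m+n ≠ 0, m+2n ≠ 0, m+3n ≠ 0 and 2m+3n ≠ 0, converges and equals ζ₂(p,s,q,r,u,v; G₂) + (−1)^p ζ₂(p,q,s,r,v,u; G₂) + (−1)^{p+q} ζ₂(v,q,r,s,p,u; G₂) + (−1)^{p+q+v} ζ₂(v,r,q,s,u,p; G₂) + (−1)^{p+q+r+v} ζ₂(u,r,s,q,v,p; G₂) + (−1)^{p+q+r+u+v} ζ₂(u,s,r,q,p,v; G₂). -/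

import Mathlib

open Complex

/-- The zeta-function of the root system `G₂` with complex exponents:
`ζ₂(s₁,…,s₆;G₂) = ∑_{m,n≥1} 1/(m^{s₁} n^{s₂} (m+n)^{s₃} (m+2n)^{s₄} (m+3n)^{s₅} (2m+3n)^{s₆})`,
where the powers are complex powers of positive reals. -/
noncomputable def zetaG2C (s₁ s₂ s₃ s₄ s₅ s₆ : ℂ) : ℂ :=
  ∑' (m : ℕ+) (n : ℕ+),
    1 / (((m : ℕ) : ℂ) ^ s₁ * ((n : ℕ) : ℂ) ^ s₂ * (((m : ℕ) : ℂ) + ((n : ℕ) : ℂ)) ^ s₃ *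
      (((m : ℕ) : ℂ) + 2 * ((n : ℕ) : ℂ)) ^ s₄ * (((m : ℕ) : ℂ) + 3 * ((n : ℕ) : ℂ)) ^ s₅ *
      (2 * ((m : ℕ) : ℂ) + 3 * ((n : ℕ) : ℂ)) ^ s₆)

/-- The index set of the lattice sum: `n ≥ 1`, `m ≠ 0`, `m+n ≠ 0`, `m+2n ≠ 0`, `m+3n ≠ 0`,
`2m+3n ≠ 0`. -/
def latticeCondN (x : ℤ × ℤ) : Prop :=
  1 ≤ x.2 ∧ x.1 ≠ 0 ∧ x.1 + x.2 ≠ 0 ∧ x.1 + 2 * x.2 ≠ 0 ∧ x.1 + 3 * x.2 ≠ 0 ∧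
    2 * x.1 + 3 * x.2 ≠ 0

/-- The summand of `zetaG2C` as a function on `ℕ+ × ℕ+`. -/
noncomputable def Zterm (w₁ w₂ w₃ w₄ w₅ w₆ : ℂ) (x : ℕ+ × ℕ+) : ℂ :=
  1 / (((x.1 : ℕ) : ℂ) ^ w₁ * ((x.2 : ℕ) : ℂ) ^ w₂ * (((x.1 : ℕ) : ℂ) + ((x.2 : ℕ) : ℂ)) ^ w₃ *
    (((x.1 : ℕ) : ℂ) + 2 * ((x.2 : ℕ) : ℂ)) ^ w₄ * (((x.1 : ℕ) : ℂ) + 3 * ((x.2 : ℕ) : ℂ)) ^ w₅ *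
    (2 * ((x.1 : ℕ) : ℂ) + 3 * ((x.2 : ℕ) : ℂ)) ^ w₆)

/-- The summand of the lattice sum as a function on `ℤ × ℤ`. -/
noncomputable def Lterm (p q r u v : ℕ) (s : ℂ) (z : ℤ × ℤ) : ℂ :=
  1 / ((z.1 : ℂ) ^ p * (z.2 : ℂ) ^ s * ((z.1 : ℂ) + (z.2 : ℂ)) ^ q *
    ((z.1 : ℂ) + 2 * (z.2 : ℂ)) ^ r * ((z.1 : ℂ) + 3 * (z.2 : ℂ)) ^ u *
    (2 * (z.1 : ℂ) + 3 * (z.2 : ℂ)) ^ v)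

lemma summable_bound_aux {σ : ℝ} (hσ : 1 < σ) :
    Summable (fun x : ℕ+ × ℕ+ => 1 / ((x.1 : ℝ) ^ 2 * (x.2 : ℝ) ^ σ)) := by
  have h1 : Summable (fun m : ℕ+ => 1 / (m : ℝ) ^ 2) := by
    have := Real.summable_one_div_nat_pow.mpr (le_refl 2)
    exact this.comp_injective (fun a b h => PNat.coe_injective h)
  have h2 : Summable (fun n : ℕ+ => 1 / (n : ℝ) ^ σ) := by
    have := (Real.summable_one_div_nat_rpow).mpr hσ
    exact this.comp_injective (fun a b h => PNat.coe_injective h)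
  have := h1.mul_of_nonneg h2 (fun m => by positivity) (fun n => by positivity)
  convert this using 2 with x
  rw [div_mul_div_comm, one_mul]

lemma norm_Zterm_le (w₁ w₂ w₃ w₄ w₅ w₆ : ℂ) {σ : ℝ} (hσ : 1 < σ)
    (h1 : 1 ≤ w₁.re) (h2 : 0 ≤ w₂.re) (h3 : 0 ≤ w₃.re) (h4 : 0 ≤ w₄.re) (h5 : 1 ≤ w₅.re)
    (h6 : 0 ≤ w₆.re) (hone : σ ≤ w₂.re ∨ σ ≤ w₃.re ∨ σ ≤ w₄.re) (x : ℕ+ × ℕ+) :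
    ‖Zterm w₁ w₂ w₃ w₄ w₅ w₆ x‖ ≤ 1 / ((x.1 : ℝ) ^ 2 * (x.2 : ℝ) ^ σ) := by
  obtain ⟨m, n⟩ := x
  have ha : (1:ℝ) ≤ (m : ℝ) := by exact_mod_cast m.one_le
  have hb : (1:ℝ) ≤ (n : ℝ) := by exact_mod_cast n.one_le
  set a : ℝ := (m : ℝ) with hadef
  set b : ℝ := (n : ℝ) with hbdef
  have ha0 : (0:ℝ) < a := by linarith
  have hb0 : (0:ℝ) < b := by linarith
  have hσ0 : (0:ℝ) ≤ σ := by linarith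
  have nb : ∀ (c : ℝ), 0 < c → ∀ w : ℂ, ‖((c : ℝ) : ℂ) ^ w‖ = c ^ w.re := fun c hc w => by
    rw [Complex.norm_cpow_eq_rpow_re_of_pos hc]
  have key : ‖Zterm w₁ w₂ w₃ w₄ w₅ w₆ (m, n)‖ =
      1 / (a ^ w₁.re * b ^ w₂.re * (a + b) ^ w₃.re * (a + 2*b) ^ w₄.re * (a + 3*b) ^ w₅.re *
        (2*a + 3*b) ^ w₆.re) := by
    simp only [Zterm]
    rw [show ((((m, n).1 : ℕ)) : ℂ) = ((a : ℝ) : ℂ) by push_cast [hadef]; ring,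
      show ((((m, n).2 : ℕ)) : ℂ) = ((b : ℝ) : ℂ) by push_cast [hbdef]; ring]
    rw [show ((a:ℝ):ℂ) + ((b:ℝ):ℂ) = (((a + b : ℝ)) : ℂ) by push_cast; ring,
      show ((a:ℝ):ℂ) + 2 * ((b:ℝ):ℂ) = (((a + 2*b : ℝ)) : ℂ) by push_cast; ring,
      show ((a:ℝ):ℂ) + 3 * ((b:ℝ):ℂ) = (((a + 3*b : ℝ)) : ℂ) by push_cast; ring,
      show 2 * ((a:ℝ):ℂ) + 3 * ((b:ℝ):ℂ) = (((2*a + 3*b : ℝ)) : ℂ) by push_cast; ring]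
    rw [norm_div, norm_one, norm_mul, norm_mul, norm_mul, norm_mul, norm_mul,
      nb a ha0, nb b hb0, nb (a+b) (by linarith), nb (a+2*b) (by linarith),
      nb (a+3*b) (by linarith), nb (2*a+3*b) (by linarith)]
  rw [key]
  have one_le_rpow : ∀ (c : ℝ) (e : ℝ), 1 ≤ c → 0 ≤ e → 1 ≤ c ^ e := fun c e hc he => by
    calc (1:ℝ) = c ^ (0:ℝ) := by rw [Real.rpow_zero]
    _ ≤ c ^ e := Real.rpow_le_rpow_of_exponent_le hc he
  have self_le_rpow : ∀ (c : ℝ) (e : ℝ), 1 ≤ c → 1 ≤ e → c ≤ c ^ e := fun c e hc he => by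
    calc c = c ^ (1:ℝ) := by rw [Real.rpow_one]
    _ ≤ c ^ e := Real.rpow_le_rpow_of_exponent_le hc he
  have hmid : b ^ σ ≤ b ^ w₂.re * (a + b) ^ w₃.re * (a + 2*b) ^ w₄.re := by
    have e2 : (1:ℝ) ≤ b ^ w₂.re := one_le_rpow _ _ hb h2
    have e3 : (1:ℝ) ≤ (a + b) ^ w₃.re := one_le_rpow _ _ (by linarith) h3
    have e4 : (1:ℝ) ≤ (a + 2*b) ^ w₄.re := one_le_rpow _ _ (by linarith) h4
    rcases hone with h | h | h
    · have e2' : b ^ σ ≤ b ^ w₂.re := Real.rpow_le_rpow_of_exponent_le hb h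
      calc b ^ σ = b ^ σ * 1 * 1 := by ring
      _ ≤ b ^ w₂.re * (a + b) ^ w₃.re * (a + 2*b) ^ w₄.re :=
        mul_le_mul (mul_le_mul e2' e3 zero_le_one (by positivity)) e4 zero_le_one (by positivity)
    · have e3' : b ^ σ ≤ (a + b) ^ w₃.re :=
        le_trans (Real.rpow_le_rpow (by linarith) (by linarith) hσ0)
          (Real.rpow_le_rpow_of_exponent_le (by linarith) h)
      calc b ^ σ = 1 * b ^ σ * 1 := by ring
      _ ≤ b ^ w₂.re * (a + b) ^ w₃.re * (a + 2*b) ^ w₄.re :=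
        mul_le_mul (mul_le_mul e2 e3' (by positivity) (by positivity)) e4 zero_le_one
          (by positivity)
    · have e4' : b ^ σ ≤ (a + 2*b) ^ w₄.re :=
        le_trans (Real.rpow_le_rpow (by linarith) (by linarith) hσ0)
          (Real.rpow_le_rpow_of_exponent_le (by linarith) h)
      calc b ^ σ = 1 * 1 * b ^ σ := by ring
      _ ≤ b ^ w₂.re * (a + b) ^ w₃.re * (a + 2*b) ^ w₄.re :=
        mul_le_mul (mul_le_mul e2 e3 zero_le_one (by positivity)) e4' (by positivity)
          (by positivity)
  have hD : a ^ 2 * b ^ σ ≤ a ^ w₁.re * b ^ w₂.re * (a + b) ^ w₃.re * (a + 2*b) ^ w₄.re *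
      (a + 3*b) ^ w₅.re * (2*a + 3*b) ^ w₆.re := by
    have e1 : a ≤ a ^ w₁.re := self_le_rpow _ _ ha h1
    have e5 : a ≤ (a + 3*b) ^ w₅.re :=
      le_trans (by linarith) (self_le_rpow (a + 3*b) _ (by linarith) h5)
    have e6 : (1:ℝ) ≤ (2*a + 3*b) ^ w₆.re := one_le_rpow _ _ (by linarith) h6
    calc a ^ 2 * b ^ σ = a * (b ^ σ) * a * 1 := by ring
    _ ≤ a ^ w₁.re * (b ^ w₂.re * (a + b) ^ w₃.re * (a + 2*b) ^ w₄.re) * (a + 3*b) ^ w₅.re *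
        (2*a + 3*b) ^ w₆.re :=
        mul_le_mul (mul_le_mul (mul_le_mul e1 hmid (by positivity) (by positivity)) e5
          (by positivity) (by positivity)) e6 zero_le_one (by positivity)
    _ = a ^ w₁.re * b ^ w₂.re * (a + b) ^ w₃.re * (a + 2*b) ^ w₄.re *
        (a + 3*b) ^ w₅.re * (2*a + 3*b) ^ w₆.re := by ring
  have hpos : (0:ℝ) < a ^ 2 * b ^ σ := by positivity
  exact one_div_le_one_div_of_le hpos hD

lemma summable_Zterm (w₁ w₂ w₃ w₄ w₅ w₆ : ℂ) {σ : ℝ} (hσ : 1 < σ)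
    (h1 : 1 ≤ w₁.re) (h2 : 0 ≤ w₂.re) (h3 : 0 ≤ w₃.re) (h4 : 0 ≤ w₄.re) (h5 : 1 ≤ w₅.re)
    (h6 : 0 ≤ w₆.re) (hone : σ ≤ w₂.re ∨ σ ≤ w₃.re ∨ σ ≤ w₄.re) :
    Summable (Zterm w₁ w₂ w₃ w₄ w₅ w₆) :=
  Summable.of_norm <| (summable_bound_aux hσ).of_nonneg_of_le (fun _ => norm_nonneg _)
    (norm_Zterm_le w₁ w₂ w₃ w₄ w₅ w₆ hσ h1 h2 h3 h4 h5 h6 hone)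

lemma zetaG2C_eq_tsum (w₁ w₂ w₃ w₄ w₅ w₆ : ℂ) (h : Summable (Zterm w₁ w₂ w₃ w₄ w₅ w₆)) :
    zetaG2C w₁ w₂ w₃ w₄ w₅ w₆ = ∑' x : ℕ+ × ℕ+, Zterm w₁ w₂ w₃ w₄ w₅ w₆ x := by
  rw [zetaG2C, Summable.tsum_prod' h (fun m => (h.prod_factor m))]
  rfl

def regionMap : Fin 6 → ℕ+ × ℕ+ → ℤ × ℤ := fun i x =>
  match i with
  | 0 => (((x.1 : ℕ) : ℤ), ((x.2 : ℕ) : ℤ))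
  | 1 => (-((x.1 : ℕ) : ℤ), ((x.1 : ℕ) : ℤ) + ((x.2 : ℕ) : ℤ))
  | 2 => (-(3 * ((x.1 : ℕ) : ℤ) + ((x.2 : ℕ) : ℤ)), 2 * ((x.1 : ℕ) : ℤ) + ((x.2 : ℕ) : ℤ))
  | 3 => (-(3 * ((x.1 : ℕ) : ℤ) + 2 * ((x.2 : ℕ) : ℤ)), 2 * ((x.1 : ℕ) : ℤ) + ((x.2 : ℕ) : ℤ))
  | 4 => (-(2 * ((x.1 : ℕ) : ℤ) + 3 * ((x.2 : ℕ) : ℤ)), ((x.1 : ℕ) : ℤ) + ((x.2 : ℕ) : ℤ))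
  | 5 => (-(((x.1 : ℕ) : ℤ) + 3 * ((x.2 : ℕ) : ℤ)), ((x.2 : ℕ) : ℤ))

lemma regionMap_mem (i : Fin 6) (x : ℕ+ × ℕ+) : latticeCondN (regionMap i x) := by
  have ha : 1 ≤ ((x.1 : ℕ) : ℤ) := by exact_mod_cast x.1.one_le
  have hb : 1 ≤ ((x.2 : ℕ) : ℤ) := by exact_mod_cast x.2.one_le
  fin_cases i <;> simp only [regionMap, latticeCondN] <;> constructor <;> omega

lemma regionMap_bijective :
    Function.Bijective (fun y : Fin 6 × ℕ+ × ℕ+ =>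
      (⟨regionMap y.1 y.2, regionMap_mem y.1 y.2⟩ : {x : ℤ × ℤ // latticeCondN x})) := by
  constructor
  · rintro ⟨i, a, b⟩ ⟨j, c, d⟩ h
    rw [Subtype.mk.injEq] at h
    have ha : 1 ≤ ((a : ℕ) : ℤ) := by exact_mod_cast a.one_le
    have hb : 1 ≤ ((b : ℕ) : ℤ) := by exact_mod_cast b.one_le
    have hc : 1 ≤ ((c : ℕ) : ℤ) := by exact_mod_cast c.one_le
    have hd : 1 ≤ ((d : ℕ) : ℤ) := by exact_mod_cast d.one_le
    fin_cases i <;> fin_cases j <;>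
      simp only [regionMap, Prod.mk.injEq] at h <;>
      simp only [Prod.mk.injEq] <;>
      first
        | (exfalso; omega)
        | exact ⟨trivial, PNat.coe_injective (by omega), PNat.coe_injective (by omega)⟩
  · rintro ⟨⟨m, n⟩, hc⟩
    simp only [latticeCondN] at hc
    obtain ⟨hn, h0, h1, h2, h3, h6⟩ := hc
    by_cases c0 : 0 < m
    · exact ⟨⟨0, ⟨m.toNat, by omega⟩, ⟨n.toNat, by omega⟩⟩, by
        apply Subtype.ext; simp only [regionMap, PNat.mk_coe, Prod.mk.injEq]; omega⟩
    · by_cases c1 : 0 < m + n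
      · exact ⟨⟨1, ⟨(-m).toNat, by omega⟩, ⟨(m + n).toNat, by omega⟩⟩, by
          apply Subtype.ext; simp only [regionMap, PNat.mk_coe, Prod.mk.injEq]; omega⟩
      · by_cases c2 : 0 < 2 * m + 3 * n
        · exact ⟨⟨2, ⟨(-(m + n)).toNat, by omega⟩, ⟨(2 * m + 3 * n).toNat, by omega⟩⟩, by
            apply Subtype.ext; simp only [regionMap, PNat.mk_coe, Prod.mk.injEq]; omega⟩
        · by_cases c3 : 0 < m + 2 * n
          · exact ⟨⟨3, ⟨(m + 2 * n).toNat, by omega⟩, ⟨(-(2 * m + 3 * n)).toNat, by omega⟩⟩, by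
              apply Subtype.ext; simp only [regionMap, PNat.mk_coe, Prod.mk.injEq]; omega⟩
          · by_cases c4 : 0 < m + 3 * n
            · exact ⟨⟨4, ⟨(m + 3 * n).toNat, by omega⟩, ⟨(-(m + 2 * n)).toNat, by omega⟩⟩, by
                apply Subtype.ext; simp only [regionMap, PNat.mk_coe, Prod.mk.injEq]; omega⟩
            · exact ⟨⟨5, ⟨(-(m + 3 * n)).toNat, by omega⟩, ⟨n.toNat, by omega⟩⟩, by
                apply Subtype.ext; simp only [regionMap, PNat.mk_coe, Prod.mk.injEq]; omega⟩

lemma key_sign (k : ℕ) (X Y : ℂ) (h : X = (-1:ℂ)^k * Y) : 1/X = (-1:ℂ)^k * (1/Y) := by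
  subst h
  rcases Nat.even_or_odd k with he | ho
  · simp [he.neg_one_pow]
  · simp [ho.neg_one_pow, inv_neg]

lemma regionTerm0 (p q r u v : ℕ) (s : ℂ) (a b : ℕ+) :
    Lterm p q r u v s (regionMap 0 (a, b)) = Zterm p s q r u v (a, b) := by
  simp only [Lterm, Zterm, regionMap, Complex.cpow_natCast]
  push_cast
  ring

lemma regionTerm1 (p q r u v : ℕ) (s : ℂ) (a b : ℕ+) :
    Lterm p q r u v s (regionMap 1 (a, b)) = (-1:ℂ)^p * Zterm p q s r v u (a, b) := by
  set A : ℂ := ((a : ℕ) : ℂ) with hA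
  set B : ℂ := ((b : ℕ) : ℂ) with hB
  have c₁ : ((-((a : ℕ) : ℤ) : ℤ) : ℂ) = -A := by rw [hA]; push_cast; ring
  have c₂ : (((((a : ℕ) : ℤ) + ((b : ℕ) : ℤ)) : ℤ) : ℂ) = A + B := by
    rw [hA, hB]; push_cast; ring
  simp only [Lterm, Zterm, regionMap, Complex.cpow_natCast, c₁, c₂]
  rw [show (-A + (A + B)) = B by ring,
    show (-A + 2 * (A + B)) = A + 2 * B by ring,
    show (-A + 3 * (A + B)) = 2 * A + 3 * B by ring,
    show (2 * -A + 3 * (A + B)) = A + 3 * B by ring]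
  rw [neg_pow A p]
  apply key_sign
  ring

lemma regionTerm2 (p q r u v : ℕ) (s : ℂ) (a b : ℕ+) :
    Lterm p q r u v s (regionMap 2 (a, b)) = (-1:ℂ)^(p+q) * Zterm v q r s p u (b, a) := by
  set A : ℂ := ((a : ℕ) : ℂ) with hA
  set B : ℂ := ((b : ℕ) : ℂ) with hB
  have c₁ : ((-(3 * ((a : ℕ) : ℤ) + ((b : ℕ) : ℤ)) : ℤ) : ℂ) = -(3 * A + B) := by
    rw [hA, hB]; push_cast; ring
  have c₂ : (((2 * ((a : ℕ) : ℤ) + ((b : ℕ) : ℤ)) : ℤ) : ℂ) = 2 * A + B := by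
    rw [hA, hB]; push_cast; ring
  simp only [Lterm, Zterm, regionMap, Complex.cpow_natCast, c₁, c₂]
  rw [show (-(3 * A + B) + (2 * A + B)) = -A by ring,
    show (-(3 * A + B) + 2 * (2 * A + B)) = A + B by ring,
    show (-(3 * A + B) + 3 * (2 * A + B)) = 3 * A + 2 * B by ring,
    show (2 * -(3 * A + B) + 3 * (2 * A + B)) = B by ring,
    show (B + 2 * A) = 2 * A + B by ring]
  rw [neg_pow (3 * A + B) p, neg_pow A q]
  apply key_sign
  ring

lemma regionTerm3 (p q r u v : ℕ) (s : ℂ) (a b : ℕ+) :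
    Lterm p q r u v s (regionMap 3 (a, b)) = (-1:ℂ)^(p+q+v) * Zterm v r q s u p (b, a) := by
  set A : ℂ := ((a : ℕ) : ℂ) with hA
  set B : ℂ := ((b : ℕ) : ℂ) with hB
  have c₁ : ((-(3 * ((a : ℕ) : ℤ) + 2 * ((b : ℕ) : ℤ)) : ℤ) : ℂ) = -(3 * A + 2 * B) := by
    rw [hA, hB]; push_cast; ring
  have c₂ : (((2 * ((a : ℕ) : ℤ) + ((b : ℕ) : ℤ)) : ℤ) : ℂ) = 2 * A + B := by
    rw [hA, hB]; push_cast; ring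
  simp only [Lterm, Zterm, regionMap, Complex.cpow_natCast, c₁, c₂]
  rw [show (-(3 * A + 2 * B) + (2 * A + B)) = -(A + B) by ring,
    show (-(3 * A + 2 * B) + 2 * (2 * A + B)) = A by ring,
    show (-(3 * A + 2 * B) + 3 * (2 * A + B)) = 3 * A + B by ring,
    show (2 * -(3 * A + 2 * B) + 3 * (2 * A + B)) = -B by ring,
    show (B + 2 * A) = 2 * A + B by ring]
  rw [neg_pow (3 * A + 2 * B) p, neg_pow (A + B) q, neg_pow B v]
  apply key_sign
  ring

lemma regionTerm4 (p q r u v : ℕ) (s : ℂ) (a b : ℕ+) :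
    Lterm p q r u v s (regionMap 4 (a, b)) = (-1:ℂ)^(p+q+r+v) * Zterm u r s q v p (a, b) := by
  set A : ℂ := ((a : ℕ) : ℂ) with hA
  set B : ℂ := ((b : ℕ) : ℂ) with hB
  have c₁ : ((-(2 * ((a : ℕ) : ℤ) + 3 * ((b : ℕ) : ℤ)) : ℤ) : ℂ) = -(2 * A + 3 * B) := by
    rw [hA, hB]; push_cast; ring
  have c₂ : (((((a : ℕ) : ℤ) + ((b : ℕ) : ℤ)) : ℤ) : ℂ) = A + B := by
    rw [hA, hB]; push_cast; ring
  simp only [Lterm, Zterm, regionMap, Complex.cpow_natCast, c₁, c₂]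
  rw [show (-(2 * A + 3 * B) + (A + B)) = -(A + 2 * B) by ring,
    show (-(2 * A + 3 * B) + 2 * (A + B)) = -B by ring,
    show (-(2 * A + 3 * B) + 3 * (A + B)) = A by ring,
    show (2 * -(2 * A + 3 * B) + 3 * (A + B)) = -(A + 3 * B) by ring]
  rw [neg_pow (2 * A + 3 * B) p, neg_pow (A + 2 * B) q, neg_pow B r, neg_pow (A + 3 * B) v]
  apply key_sign
  ring

lemma regionTerm5 (p q r u v : ℕ) (s : ℂ) (a b : ℕ+) :
    Lterm p q r u v s (regionMap 5 (a, b)) = (-1:ℂ)^(p+q+r+u+v) * Zterm u s r q p v (a, b) := by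
  set A : ℂ := ((a : ℕ) : ℂ) with hA
  set B : ℂ := ((b : ℕ) : ℂ) with hB
  have c₁ : ((-(((a : ℕ) : ℤ) + 3 * ((b : ℕ) : ℤ)) : ℤ) : ℂ) = -(A + 3 * B) := by
    rw [hA, hB]; push_cast; ring
  have c₂ : ((((b : ℕ) : ℤ) : ℤ) : ℂ) = B := by rw [hB]; push_cast; ring
  simp only [Lterm, Zterm, regionMap, Complex.cpow_natCast, c₁, c₂]
  rw [show (-(A + 3 * B) + B) = -(A + 2 * B) by ring,
    show (-(A + 3 * B) + 2 * B) = -(A + B) by ring,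
    show (-(A + 3 * B) + 3 * B) = -A by ring,
    show (2 * -(A + 3 * B) + 3 * B) = -(2 * A + 3 * B) by ring]
  rw [neg_pow (A + 3 * B) p, neg_pow (A + 2 * B) q, neg_pow (A + B) r, neg_pow A u,
    neg_pow (2 * A + 3 * B) v]
  apply key_sign
  ring

set_option maxHeartbeats 2000000 in
theorem latticeSum_eq_six_term_sum (p q r u v : ℕ) (hp : 0 < p) (hq : 0 < q) (hr : 0 < r)
    (hu : 0 < u) (hv : 0 < v) (s : ℂ) (hs : 1 < s.re) :
    Summable (fun x : {x : ℤ × ℤ // latticeCondN x} =>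
      1 / ((x.1.1 : ℂ) ^ p * (x.1.2 : ℂ) ^ s * ((x.1.1 : ℂ) + (x.1.2 : ℂ)) ^ q *
        ((x.1.1 : ℂ) + 2 * (x.1.2 : ℂ)) ^ r * ((x.1.1 : ℂ) + 3 * (x.1.2 : ℂ)) ^ u *
        (2 * (x.1.1 : ℂ) + 3 * (x.1.2 : ℂ)) ^ v)) ∧
    ∑' x : {x : ℤ × ℤ // latticeCondN x},
        1 / ((x.1.1 : ℂ) ^ p * (x.1.2 : ℂ) ^ s * ((x.1.1 : ℂ) + (x.1.2 : ℂ)) ^ q *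
          ((x.1.1 : ℂ) + 2 * (x.1.2 : ℂ)) ^ r * ((x.1.1 : ℂ) + 3 * (x.1.2 : ℂ)) ^ u *
          (2 * (x.1.1 : ℂ) + 3 * (x.1.2 : ℂ)) ^ v) =
      zetaG2C p s q r u v + (-1 : ℂ) ^ p * zetaG2C p q s r v u +
        (-1 : ℂ) ^ (p + q) * zetaG2C v q r s p u +
        (-1 : ℂ) ^ (p + q + v) * zetaG2C v r q s u p +
        (-1 : ℂ) ^ (p + q + r + v) * zetaG2C u r s q v p +
        (-1 : ℂ) ^ (p + q + r + u + v) * zetaG2C u s r q p v := by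
  have hre1 : ∀ k : ℕ, 0 < k → 1 ≤ ((k : ℂ)).re := fun k hk => by
    simp only [Complex.natCast_re]; exact_mod_cast hk
  have hre0 : ∀ k : ℕ, 0 ≤ ((k : ℂ)).re := fun k => by
    simp only [Complex.natCast_re]; positivity
  have hs0 : 0 ≤ s.re := by linarith
  have hs1 : 1 ≤ s.re := by linarith
  -- summability of the six zeta term families
  have hz0 : Summable (Zterm p s q r u v) :=
    summable_Zterm _ _ _ _ _ _ hs (hre1 p hp) hs0 (hre0 q) (hre0 r) (hre1 u hu) (hre0 v)
      (Or.inl le_rfl)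
  have hz1 : Summable (Zterm p q s r v u) :=
    summable_Zterm _ _ _ _ _ _ hs (hre1 p hp) (hre0 q) hs0 (hre0 r) (hre1 v hv) (hre0 u)
      (Or.inr (Or.inl le_rfl))
  have hz2 : Summable (Zterm v q r s p u) :=
    summable_Zterm _ _ _ _ _ _ hs (hre1 v hv) (hre0 q) (hre0 r) hs0 (hre1 p hp) (hre0 u)
      (Or.inr (Or.inr le_rfl))
  have hz3 : Summable (Zterm v r q s u p) :=
    summable_Zterm _ _ _ _ _ _ hs (hre1 v hv) (hre0 r) (hre0 q) hs0 (hre1 u hu) (hre0 p)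
      (Or.inr (Or.inr le_rfl))
  have hz4 : Summable (Zterm u r s q v p) :=
    summable_Zterm _ _ _ _ _ _ hs (hre1 u hu) (hre0 r) hs0 (hre0 q) (hre1 v hv) (hre0 p)
      (Or.inr (Or.inl le_rfl))
  have hz5 : Summable (Zterm u s r q p v) :=
    summable_Zterm _ _ _ _ _ _ hs (hre1 u hu) hs0 (hre0 r) (hre0 q) (hre1 p hp) (hre0 v)
      (Or.inl le_rfl)
  set e : Fin 6 × ℕ+ × ℕ+ ≃ {x : ℤ × ℤ // latticeCondN x} :=
    Equiv.ofBijective _ regionMap_bijective with he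
  set f : {x : ℤ × ℤ // latticeCondN x} → ℂ := fun x => Lterm p q r u v s x.1 with hf
  have hcomp : ∀ y : Fin 6 × ℕ+ × ℕ+, f (e y) = Lterm p q r u v s (regionMap y.1 y.2) :=
    fun y => rfl
  -- explicit values on each region
  have hg : ∀ (i : Fin 6) (x : ℕ+ × ℕ+), f (e (i, x)) =
      (match i with
       | 0 => Zterm p s q r u v x
       | 1 => (-1:ℂ)^p * Zterm p q s r v u x
       | 2 => (-1:ℂ)^(p+q) * Zterm v q r s p u (x.2, x.1)
       | 3 => (-1:ℂ)^(p+q+v) * Zterm v r q s u p (x.2, x.1)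
       | 4 => (-1:ℂ)^(p+q+r+v) * Zterm u r s q v p x
       | 5 => (-1:ℂ)^(p+q+r+u+v) * Zterm u s r q p v x) := by
    intro i x
    obtain ⟨a, b⟩ := x
    rw [hcomp]
    fin_cases i
    · exact regionTerm0 p q r u v s a b
    · exact regionTerm1 p q r u v s a b
    · exact regionTerm2 p q r u v s a b
    · exact regionTerm3 p q r u v s a b
    · exact regionTerm4 p q r u v s a b
    · exact regionTerm5 p q r u v s a b
  -- summability of f ∘ e
  have hswap2 : Summable (fun x : ℕ+ × ℕ+ => Zterm v q r s p u (x.2, x.1)) :=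
    (Equiv.prodComm ℕ+ ℕ+).summable_iff.mpr hz2
  have hswap3 : Summable (fun x : ℕ+ × ℕ+ => Zterm v r q s u p (x.2, x.1)) :=
    (Equiv.prodComm ℕ+ ℕ+).summable_iff.mpr hz3
  have hfiber : ∀ i : Fin 6, Summable (fun x : ℕ+ × ℕ+ => f (e (i, x))) := by
    intro i
    fin_cases i
    · exact hz0.congr (fun x => (hg 0 x).symm)
    · exact ((hz1.mul_left _).congr (fun x => (hg 1 x).symm))
    · exact ((hswap2.mul_left _).congr (fun x => (hg 2 x).symm))
    · exact ((hswap3.mul_left _).congr (fun x => (hg 3 x).symm))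
    · exact ((hz4.mul_left _).congr (fun x => (hg 4 x).symm))
    · exact ((hz5.mul_left _).congr (fun x => (hg 5 x).symm))
  have hcompsum : Summable (fun y : Fin 6 × ℕ+ × ℕ+ => f (e y)) := by
    apply Summable.of_norm
    rw [summable_prod_of_nonneg (fun y => norm_nonneg _)]
    refine ⟨fun i => (hfiber i).norm, ?_⟩
    exact Summable.of_finite
  have hsf : Summable f := e.summable_iff.mp hcompsum
  refine ⟨hsf, ?_⟩
  have htsum : ∑' x : {x : ℤ × ℤ // latticeCondN x}, f x = ∑' y, f (e y) := (e.tsum_eq f).symm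
  calc ∑' x : {x : ℤ × ℤ // latticeCondN x}, f x
      = ∑' y, f (e y) := htsum
    _ = ∑' (i : Fin 6), ∑' (x : ℕ+ × ℕ+), f (e (i, x)) :=
        Summable.tsum_prod' hcompsum (fun i => (hfiber i))
    _ = ∑ i : Fin 6, ∑' (x : ℕ+ × ℕ+), f (e (i, x)) := tsum_fintype _
    _ = zetaG2C p s q r u v + (-1 : ℂ) ^ p * zetaG2C p q s r v u +
        (-1 : ℂ) ^ (p + q) * zetaG2C v q r s p u +
        (-1 : ℂ) ^ (p + q + v) * zetaG2C v r q s u p +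
        (-1 : ℂ) ^ (p + q + r + v) * zetaG2C u r s q v p +
        (-1 : ℂ) ^ (p + q + r + u + v) * zetaG2C u s r q p v := by
      rw [Fin.sum_univ_six]
      have t0 : ∑' x : ℕ+ × ℕ+, f (e ((0 : Fin 6), x)) = zetaG2C p s q r u v := by
        rw [tsum_congr (fun x => hg 0 x), zetaG2C_eq_tsum _ _ _ _ _ _ hz0]
      have t1 : ∑' x : ℕ+ × ℕ+, f (e ((1 : Fin 6), x)) = (-1:ℂ)^p * zetaG2C p q s r v u := by
        rw [tsum_congr (fun x => hg 1 x), tsum_mul_left, zetaG2C_eq_tsum _ _ _ _ _ _ hz1]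
      have t2 : ∑' x : ℕ+ × ℕ+, f (e ((2 : Fin 6), x)) =
          (-1:ℂ)^(p+q) * zetaG2C v q r s p u := by
        have hpc2 : (∑' x : ℕ+ × ℕ+, Zterm v q r s p u (x.2, x.1)) =
            ∑' x : ℕ+ × ℕ+, Zterm v q r s p u x :=
          (Equiv.prodComm ℕ+ ℕ+).tsum_eq (Zterm v q r s p u)
        rw [tsum_congr (fun x => hg 2 x), tsum_mul_left, hpc2,
          zetaG2C_eq_tsum _ _ _ _ _ _ hz2]
      have t3 : ∑' x : ℕ+ × ℕ+, f (e ((3 : Fin 6), x)) =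
          (-1:ℂ)^(p+q+v) * zetaG2C v r q s u p := by
        have hpc3 : (∑' x : ℕ+ × ℕ+, Zterm v r q s u p (x.2, x.1)) =
            ∑' x : ℕ+ × ℕ+, Zterm v r q s u p x :=
          (Equiv.prodComm ℕ+ ℕ+).tsum_eq (Zterm v r q s u p)
        rw [tsum_congr (fun x => hg 3 x), tsum_mul_left, hpc3,
          zetaG2C_eq_tsum _ _ _ _ _ _ hz3]
      have t4 : ∑' x : ℕ+ × ℕ+, f (e ((4 : Fin 6), x)) =
          (-1:ℂ)^(p+q+r+v) * zetaG2C u r s q v p := by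
        rw [tsum_congr (fun x => hg 4 x), tsum_mul_left, zetaG2C_eq_tsum _ _ _ _ _ _ hz4]
      have t5 : ∑' x : ℕ+ × ℕ+, f (e ((5 : Fin 6), x)) =
          (-1:ℂ)^(p+q+r+u+v) * zetaG2C u s r q p v := by
        rw [tsum_congr (fun x => hg 5 x), tsum_mul_left, zetaG2C_eq_tsum _ _ _ _ _ _ hz5]
      rw [t0, t1, t2, t3, t4, t5]
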